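/- Let λ be a set, k ≥ 2, and let Y ⊆ λ^k be mutually algebraic with Y \ Δ_k infinite. Then there exist indices i ≠ j in {0,…,k−1} and an infinite family ℱ = {ā_n : n ∈ ℕ} ⊆ Y \ Δ_k of pairwise coordinate-disjoint tuples such that for each n, the i-th and j-th coordinates of ā_n are distinct. -/

import Mathlib

/-- `Y ⊆ λ^k` is mutually algebraic if there is `m` such that every `a ∈ λ` occurs as a
coordinate of at most `m` tuples of `Y`. -/
def MutuallyAlgebraic {lam : Type*} {k : ℕ} (Y : Set (Fin k → lam)) : Prop :=
  ∃ m : ℕ, ∀ a : lam,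
    {x ∈ Y | ∃ i, x i = a}.Finite ∧ {x ∈ Y | ∃ i, x i = a}.ncard ≤ m

/-- `Δ_k`, the set of constant `k`-tuples. -/
def Delta (lam : Type*) (k : ℕ) : Set (Fin k → lam) := {x | ∀ i j, x i = x j}

theorem stmt4 {lam : Type*} {k : ℕ} (hk : 2 ≤ k) {Y : Set (Fin k → lam)}
    (hY : MutuallyAlgebraic Y) (hinf : (Y \ Delta lam k).Infinite) :
    ∃ i j : Fin k, i ≠ j ∧ ∃ F : ℕ → (Fin k → lam),
      Function.Injective F ∧ (∀ n, F n ∈ Y \ Delta lam k) ∧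
      (∀ n m, n ≠ m → ∀ p q, F n p ≠ F m q) ∧
      ∀ n, F n i ≠ F n j := by
  classical
  obtain ⟨m, hm⟩ := hY
  -- find a pair i ≠ j with infinitely many witnesses
  have hpair : ∃ i j : Fin k, i ≠ j ∧ {x ∈ Y \ Delta lam k | x i ≠ x j}.Infinite := by
    by_contra h
    push_neg at h
    have hsub : Y \ Delta lam k ⊆
        ⋃ p : Fin k × Fin k, {x ∈ Y \ Delta lam k | x p.1 ≠ x p.2} := by
      intro x hx
      have hx2 := hx.2
      simp only [Delta, Set.mem_setOf_eq, not_forall] at hx2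
      obtain ⟨i, j, hij⟩ := hx2
      exact Set.mem_iUnion.2 ⟨(i, j), hx, hij⟩
    have hfin : (⋃ p : Fin k × Fin k, {x ∈ Y \ Delta lam k | x p.1 ≠ x p.2}).Finite := by
      apply Set.finite_iUnion
      rintro ⟨i, j⟩
      by_cases hij : i = j
      · subst hij
        convert Set.finite_empty
        ext x; simp
      · exact h i j hij
    exact hinf (hfin.subset hsub)
  obtain ⟨i, j, hij, hZ⟩ := hpair
  set Z := {x ∈ Y \ Delta lam k | x i ≠ x j} with hZdef
  refine ⟨i, j, hij, ?_⟩
  -- bad set relative to a list of already-chosen tuples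
  set bad : List (Fin k → lam) → Set (Fin k → lam) :=
    fun l => {x | ∃ y ∈ l, ∃ p q : Fin k, x p = y q} with hbad
  have hfin : ∀ l, (Z ∩ bad l).Finite := by
    intro l
    have hsub : Z ∩ bad l ⊆
        ⋃ y ∈ l.toFinset, ⋃ q : Fin k, {x ∈ Y | ∃ p, x p = y q} := by
      rintro x ⟨hxZ, y, hyl, p, q, hpq⟩
      have hxY : x ∈ Y := hxZ.1.1
      exact Set.mem_iUnion₂.2 ⟨y, List.mem_toFinset.2 hyl,
        Set.mem_iUnion.2 ⟨q, hxY, p, hpq⟩⟩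
    refine Set.Finite.subset ?_ hsub
    exact Set.Finite.biUnion l.toFinset.finite_toSet
      (fun y _ => Set.finite_iUnion fun q => (hm (y q)).1)
  have hgood : ∀ l, (Z \ bad l).Infinite := by
    intro l
    have := hZ.diff (hfin l)
    rwa [Set.diff_self_inter] at this
  have hne : ∀ l, ∃ x, x ∈ Z \ bad l := fun l => (hgood l).nonempty
  choose pick hpick using hne
  set L : ℕ → List (Fin k → lam) :=
    fun n => Nat.rec [] (fun _ l => pick l :: l) n with hL
  set F : ℕ → (Fin k → lam) := fun n => pick (L n) with hF
  have hLsucc : ∀ n, L (n + 1) = F n :: L n := fun n => rfl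
  have hmem : ∀ a n, a < n → F a ∈ L n := by
    intro a n h
    induction n with
    | zero => omega
    | succ n ih =>
      rw [hLsucc]
      rcases Nat.lt_succ_iff_lt_or_eq.1 h with h' | h'
      · exact List.mem_cons_of_mem _ (ih h')
      · subst h'; exact List.mem_cons_self
  have hFZ : ∀ n, F n ∈ Z := fun n => (hpick (L n)).1
  have hFbad : ∀ n, F n ∉ bad (L n) := fun n => (hpick (L n)).2
  have hdisj : ∀ a b, a < b → ∀ p q, F b p ≠ F a q := by
    intro a b hab p q hpq
    exact hFbad b ⟨F a, hmem a b hab, p, q, hpq⟩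
  have hdisj' : ∀ n m, n ≠ m → ∀ p q, F n p ≠ F m q := by
    intro n m hnm p q
    rcases lt_or_gt_of_ne hnm with h | h
    · exact fun hpq => hdisj n m h q p hpq.symm
    · exact hdisj m n h p q
  have hzero : (0 : ℕ) < k := by omega
  refine ⟨F, ?_, fun n => (hFZ n).1, hdisj', fun n => (hFZ n).2⟩
  intro a b hab
  by_contra h
  exact hdisj' a b h ⟨0, hzero⟩ ⟨0, hzero⟩ (by rw [hab])
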